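/- arXiv:math/0506154 — 4 statements merged into one kernel-verified Lean document; each statement's English description precedes it below -/
import Mathlib

section
/- Let ℓ ≥ 2 and let q be a primitive ℓ-th root of unity. Suppose y, z are elements of a ℂ-algebra with zy = qyz and y^i z^{ℓ-i} = 0 for all 0 ≤ i ≤ ℓ. Then the truncated q-exponential satisfies exp_q(y+z) = exp_q(y) exp_q(z), where exp_q(w) = \sum_{i=0}^{ℓ-1} w^i/(i)_q!. -/
/-- The q-integer `(k)_q = 1 + q + ⋯ + q^(k-1)`. -/
noncomputable def qInt (q : ℂ) (k : ℕ) : ℂ := ∑ j ∈ Finset.range k, q ^ j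

/-- The q-factorial `(i)_q! = (i)_q (i-1)_q ⋯ (1)_q`. -/
noncomputable def qFact (q : ℂ) (i : ℕ) : ℂ := ∏ j ∈ Finset.range i, qInt q (j + 1)

/-- The truncated q-exponential `exp_q(w) = ∑_{i=0}^{ℓ-1} w^i/(i)_q!`
(for `q` a primitive ℓ-th root of unity). -/
noncomputable def qExp {A : Type*} [Ring A] [Algebra ℂ A] (q : ℂ) (ℓ : ℕ) (w : A) : A :=
  ∑ i ∈ Finset.range ℓ, (qFact q i)⁻¹ • w ^ i

/-- Gaussian binomial coefficients via Pascal recursion. -/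
noncomputable def qBin (q : ℂ) : ℕ → ℕ → ℂ
  | _, 0 => 1
  | 0, _ + 1 => 0
  | n + 1, k + 1 => qBin q n (k + 1) + q ^ (n - k) * qBin q n k

lemma qBin_zero (q : ℂ) (n : ℕ) : qBin q n 0 = 1 := by cases n <;> rfl

lemma qBin_succ_succ (q : ℂ) (n k : ℕ) :
    qBin q (n + 1) (k + 1) = qBin q n (k + 1) + q ^ (n - k) * qBin q n k := rfl

lemma qBin_eq_zero (q : ℂ) : ∀ n k, n < k → qBin q n k = 0
  | _, 0, h => absurd h (Nat.not_lt_zero _)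
  | 0, _ + 1, _ => rfl
  | n + 1, k + 1, h => by
      rw [qBin_succ_succ, qBin_eq_zero q n (k + 1) (by omega),
        qBin_eq_zero q n k (by omega)]
      ring

lemma qBin_diag (q : ℂ) : ∀ n, qBin q n n = 1
  | 0 => rfl
  | n + 1 => by
      rw [qBin_succ_succ, qBin_eq_zero q n (n + 1) (by omega), qBin_diag q n]
      simp

lemma qInt_add (q : ℂ) (a b : ℕ) : qInt q (a + b) = qInt q a + q ^ a * qInt q b := by
  simp [qInt, Finset.sum_range_add, Finset.mul_sum, pow_add]

lemma qFact_succ (q : ℂ) (n : ℕ) : qFact q (n + 1) = qFact q n * qInt q (n + 1) := by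
  simp [qFact, Finset.prod_range_succ]

lemma qBin_mul_fact (q : ℂ) : ∀ n k, k ≤ n →
    qBin q n k * (qFact q k * qFact q (n - k)) = qFact q n
  | 0, 0, _ => by simp [qBin_zero, qFact]
  | n + 1, 0, _ => by simp [qBin_zero, qFact]
  | n + 1, k + 1, h => by
      have hk : k ≤ n := by omega
      rcases eq_or_lt_of_le hk with rfl | hk'
      · rw [qBin_succ_succ, qBin_eq_zero q k (k + 1) (by omega), qBin_diag q k]
        simp [qFact]
      · have hk1 : k + 1 ≤ n := hk'
        have IH1 := qBin_mul_fact q n (k + 1) hk1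
        have IH2 := qBin_mul_fact q n k hk
        have hnk : n - (k + 1) + 1 = n - k := by omega
        have hsub : n + 1 - (k + 1) = n - k := by omega
        have key : qInt q (n + 1) = qInt q (n - k) + q ^ (n - k) * qInt q (k + 1) := by
          have h2 : (n - k) + (k + 1) = n + 1 := by omega
          rw [← h2, qInt_add]
        have hF : qFact q (n - k) = qFact q (n - (k + 1)) * qInt q (n - k) := by
          rw [← hnk, qFact_succ, hnk]
        rw [qFact_succ q k] at IH1
        rw [hF] at IH2
        rw [qBin_succ_succ, hsub, qFact_succ q n, key, qFact_succ q k, hF]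
        linear_combination qInt q (n - k) * IH1 +
          q ^ (n - k) * qInt q (k + 1) * IH2

section
variable {A : Type*} [Ring A] [Algebra ℂ A] {q : ℂ}

lemma zpow_mul_y {y z : A} (hcomm : z * y = q • (y * z)) (m : ℕ) :
    z ^ m * y = q ^ m • (y * z ^ m) := by
  induction m with
  | zero => simp
  | succ m ih =>
    calc z ^ (m + 1) * y = z ^ m * (z * y) := by rw [pow_succ, mul_assoc]
    _ = z ^ m * (q • (y * z)) := by rw [hcomm]
    _ = q • (z ^ m * y * z) := by rw [mul_smul_comm, mul_assoc]
    _ = q • ((q ^ m • (y * z ^ m)) * z) := by rw [ih]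
    _ = (q * q ^ m) • (y * (z ^ m * z)) := by
        rw [smul_mul_assoc, smul_smul, mul_assoc]
    _ = q ^ (m + 1) • (y * z ^ (m + 1)) := by rw [← pow_succ', ← pow_succ]

lemma qpow_add {y z : A} (hcomm : z * y = q • (y * z)) (n : ℕ) :
    (y + z) ^ n = ∑ k ∈ Finset.range (n + 1), qBin q n k • (y ^ k * z ^ (n - k)) := by
  induction n with
  | zero => simp [qBin_zero]
  | succ n ih =>
    have step : ∀ k ∈ Finset.range (n + 1),
        qBin q n k • (y ^ k * z ^ (n - k)) * (y + z)
        = (q ^ (n - k) * qBin q n k) • (y ^ (k + 1) * z ^ (n - k))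
          + qBin q n k • (y ^ k * z ^ (n + 1 - k)) := by
      intro k hk
      have hk' : k ≤ n := by simpa [Nat.lt_succ_iff] using hk
      have h1 : n + 1 - k = (n - k) + 1 := by omega
      rw [mul_add, smul_mul_assoc, smul_mul_assoc]
      congr 1
      · rw [mul_assoc, zpow_mul_y hcomm, mul_smul_comm, smul_smul, ← mul_assoc,
          pow_succ, mul_comm (qBin q n k)]
      · rw [h1, mul_assoc, ← pow_succ]
    rw [pow_succ, ih, Finset.sum_mul, Finset.sum_congr rfl step,
      Finset.sum_add_distrib]
    have hR : ∑ k ∈ Finset.range (n + 2), qBin q (n + 1) k • (y ^ k * z ^ (n + 1 - k))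
        = ∑ k ∈ Finset.range (n + 1),
            (qBin q n (k + 1) • (y ^ (k + 1) * z ^ (n - k))
              + (q ^ (n - k) * qBin q n k) • (y ^ (k + 1) * z ^ (n - k)))
          + y ^ 0 * z ^ (n + 1) := by
      rw [Finset.sum_range_succ']
      congr 1
      · apply Finset.sum_congr rfl
        intro k hk
        rw [qBin_succ_succ, add_smul, Nat.succ_sub_succ]
      · rw [qBin_zero, one_smul, Nat.sub_zero]
    have hL : ∑ k ∈ Finset.range (n + 1), qBin q n k • (y ^ k * z ^ (n + 1 - k))
        = ∑ k ∈ Finset.range (n + 1), qBin q n (k + 1) • (y ^ (k + 1) * z ^ (n - k))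
          + y ^ 0 * z ^ (n + 1) := by
      rw [Finset.sum_range_succ' (fun k => qBin q n k • (y ^ k * z ^ (n + 1 - k))) n]
      rw [Finset.sum_range_succ (fun k => qBin q n (k + 1) • (y ^ (k + 1) * z ^ (n - k)))]
      rw [qBin_eq_zero q n (n + 1) (by omega), qBin_zero, one_smul, zero_smul, add_zero,
        Nat.sub_zero]
      congr 1
      apply Finset.sum_congr rfl
      intro k hk
      rw [Nat.succ_sub_succ]
    rw [hR, hL, Finset.sum_add_distrib]
    abel

end

lemma qInt_ne_zero {q : ℂ} {ℓ : ℕ} (hℓ : 2 ≤ ℓ) (hq : IsPrimitiveRoot q ℓ)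
    {k : ℕ} (hk1 : 1 ≤ k) (hk2 : k < ℓ) : qInt q k ≠ 0 := by
  have hq1 : q ≠ 1 := by
    have := hq.pow_ne_one_of_pos_of_lt (l := 1) one_ne_zero (by omega)
    simpa using this
  have hpk : q ^ k ≠ 1 := hq.pow_ne_one_of_pos_of_lt (by omega) hk2
  intro h
  have := geom_sum_mul q k
  rw [qInt] at h
  rw [h, zero_mul] at this
  exact hpk (by linear_combination -this)

lemma qFact_ne_zero {q : ℂ} {ℓ : ℕ} (hℓ : 2 ≤ ℓ) (hq : IsPrimitiveRoot q ℓ)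
    {m : ℕ} (hm : m < ℓ) : qFact q m ≠ 0 := by
  rw [qFact]
  apply Finset.prod_ne_zero_iff.2
  intro j hj
  exact qInt_ne_zero hℓ hq (by omega) (by simp at hj; omega)

/-- Lemma 3.1: if `q` is a primitive ℓ-th root of unity (ℓ ≥ 2) and `y, z` are elements
of a ℂ-algebra with `z y = q y z` and `y^i z^{ℓ-i} = 0` for `0 ≤ i ≤ ℓ`, then
`exp_q(y + z) = exp_q(y) exp_q(z)`. -/
theorem qExp_add {A : Type*} [Ring A] [Algebra ℂ A] {q : ℂ} {ℓ : ℕ} (hℓ : 2 ≤ ℓ)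
    (hq : IsPrimitiveRoot q ℓ) (y z : A) (hcomm : z * y = q • (y * z))
    (hzero : ∀ i ≤ ℓ, y ^ i * z ^ (ℓ - i) = 0) :
    qExp q ℓ (y + z) = qExp q ℓ y * qExp q ℓ z := by
  classical
  set T : Finset (ℕ × ℕ) :=
    (Finset.range ℓ ×ˢ Finset.range ℓ).filter (fun p => p.1 + p.2 < ℓ) with hT
  have key : ∀ S : A, S = ∑ p ∈ T,
      ((qFact q p.1)⁻¹ * (qFact q p.2)⁻¹) • (y ^ p.1 * z ^ p.2) → True := fun _ _ => trivial
  -- LHS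
  have hLHS : qExp q ℓ (y + z)
      = ∑ p ∈ T, ((qFact q p.1)⁻¹ * (qFact q p.2)⁻¹) • (y ^ p.1 * z ^ p.2) := by
    rw [qExp]
    have h1 : ∀ n ∈ Finset.range ℓ, (qFact q n)⁻¹ • (y + z) ^ n
        = ∑ k ∈ Finset.range (n + 1),
            ((qFact q k)⁻¹ * (qFact q (n - k))⁻¹) • (y ^ k * z ^ (n - k)) := by
      intro n hn
      rw [qpow_add hcomm, Finset.smul_sum]
      apply Finset.sum_congr rfl
      intro k hk
      rw [smul_smul]
      congr 1
      have hkn : k ≤ n := by simpa [Nat.lt_succ_iff] using hk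
      have hnl : n < ℓ := by simpa using hn
      have hb := qBin_mul_fact q n k hkn
      have h2 := qFact_ne_zero hℓ hq hnl
      have h3 := qFact_ne_zero hℓ hq (show k < ℓ by omega)
      have h4 := qFact_ne_zero hℓ hq (show n - k < ℓ by omega)
      field_simp
      linear_combination hb
    rw [Finset.sum_congr rfl h1, Finset.sum_sigma']
    refine Finset.sum_nbij' (fun p => (p.2, p.1 - p.2)) (fun p => ⟨p.1 + p.2, p.1⟩)
      ?_ ?_ ?_ ?_ ?_
    · rintro ⟨n, k⟩ hp
      simp only [Finset.mem_sigma, Finset.mem_range] at hp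
      simp only [hT, Finset.mem_filter, Finset.mem_product, Finset.mem_range]
      omega
    · rintro ⟨i, j⟩ hp
      simp only [hT, Finset.mem_filter, Finset.mem_product, Finset.mem_range] at hp
      simp only [Finset.mem_sigma, Finset.mem_range]
      omega
    · rintro ⟨n, k⟩ hp
      simp only [Finset.mem_sigma, Finset.mem_range] at hp
      have h5 : k + (n - k) = n := by omega
      simp [h5]
    · rintro ⟨i, j⟩ hp
      simp
    · rintro ⟨n, k⟩ hp
      simp
  -- RHS
  have hRHS : qExp q ℓ y * qExp q ℓ z
      = ∑ p ∈ T, ((qFact q p.1)⁻¹ * (qFact q p.2)⁻¹) • (y ^ p.1 * z ^ p.2) := by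
    rw [qExp, qExp, Finset.sum_mul_sum, ← Finset.sum_product']
    rw [← Finset.sum_filter_add_sum_filter_not (Finset.range ℓ ×ˢ Finset.range ℓ)
      (fun p => p.1 + p.2 < ℓ)]
    have hvanish : ∑ p ∈ (Finset.range ℓ ×ˢ Finset.range ℓ).filter
        (fun p => ¬ p.1 + p.2 < ℓ),
        (qFact q p.1)⁻¹ • y ^ p.1 * (qFact q p.2)⁻¹ • z ^ p.2 = 0 := by
      apply Finset.sum_eq_zero
      rintro ⟨i, j⟩ hp
      simp only [Finset.mem_filter, Finset.mem_product, Finset.mem_range, not_lt] at hp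
      have hij : ℓ - i ≤ j := by omega
      have hz : y ^ i * z ^ j = 0 := by
        have : z ^ j = z ^ (ℓ - i) * z ^ (j - (ℓ - i)) := by
          rw [← pow_add]
          congr 1
          omega
        rw [this, ← mul_assoc, hzero i (by omega), zero_mul]
      rw [smul_mul_smul_comm, hz, smul_zero]
    rw [hvanish, add_zero]
    apply Finset.sum_congr rfl
    rintro ⟨i, j⟩ hp
    rw [smul_mul_smul_comm]
  rw [hLHS, hRHS]
end

section
/- Let A be an algebra over a field with multiplication m, let σ be an algebra automorphism of A, let D₁ be a σ,1-skew derivation (D₁(ab) = D₁(a)σ(b) + aD₁(b)) and D₂ a 1,σ-skew derivation (D₂(ab) = D₂(a)b + σ(a)D₂(b)). Then μ₁ = m ∘ (D₁ ⊗ D₂), i.e. μ₁(a ⊗ b) = D₁(a)D₂(b), is a Hochschild two-cocycle: μ₁(a⊗b)c + μ₁(ab⊗c) = μ₁(a⊗bc) + aμ₁(b⊗c) for all a,b,c ∈ A. -/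
/-- Lemma 3.3: if `σ` is an automorphism of an algebra `A` over a field `k`,
`D₁` is a `σ,1`-skew derivation and `D₂` is a `1,σ`-skew derivation, then
`μ₁(a ⊗ b) = D₁(a) D₂(b)` is a Hochschild two-cocycle. -/
theorem skewDerivations_give_hochschild_two_cocycle
    {k A : Type*} [Field k] [Ring A] [Algebra k A]
    (σ : A ≃ₐ[k] A) (D₁ D₂ : A →ₗ[k] A)
    (hD₁ : ∀ a b : A, D₁ (a * b) = D₁ a * σ b + a * D₁ b)
    (hD₂ : ∀ a b : A, D₂ (a * b) = D₂ a * b + σ a * D₂ b) :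
    ∀ a b c : A,
      (D₁ a * D₂ b) * c + D₁ (a * b) * D₂ c
        = D₁ a * D₂ (b * c) + a * (D₁ b * D₂ c) := by
  intro a b c
  rw [hD₁, hD₂]
  noncomm_ring
end

section
/- Let A be a ℂ-algebra on which the Hopf algebra H_q acts making A an H_q-module algebra, and let F = exp_q(t D₁ ⊗ D₂) be a universal deformation formula based on H_q (satisfying (Δ⊗id)(F)(F⊗1) = (id⊗Δ)(F)(1⊗F) and (ε⊗id)(F) = 1⊗1 = (id⊗ε)(F)). Then the product a * b = (m ∘ F)(a ⊗ b) on A[[t]] is associative with unit 1_A. -/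
open TensorProduct

/-- The operator on `A ⊗ A` induced by an element of `B ⊗ B` via an action
`act : B → End(A)`. -/
noncomputable def actTwo {B A : Type*} [Ring B] [Algebra ℂ B] [Ring A] [Algebra ℂ A]
    (act : B →ₗ[ℂ] Module.End ℂ A) :
    B ⊗[ℂ] B →ₗ[ℂ] (A ⊗[ℂ] A →ₗ[ℂ] A ⊗[ℂ] A) :=
  TensorProduct.homTensorHomMap (RingHom.id ℂ) A A A A ∘ₗ TensorProduct.map act act

/-- `μ_w(a,b) = m(w·(a ⊗ b))` for `w ∈ B ⊗ B`. -/
noncomputable def muF {B A : Type*} [Ring B] [Algebra ℂ B] [Ring A] [Algebra ℂ A]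
    (act : B →ₗ[ℂ] Module.End ℂ A) (w : B ⊗[ℂ] B) (a b : A) : A :=
  LinearMap.mul' ℂ A ((actTwo act w) (a ⊗ₜ b))

/-- The star product `a * b = (m ∘ F)(a ⊗ b)` on `A[[t]]`, where
`F = Σ tⁿ F n ∈ (B ⊗ B)[[t]]`, extended ℂ[[t]]-bilinearly. -/
noncomputable def starMul {B A : Type*} [Ring B] [Algebra ℂ B] [Ring A] [Algebra ℂ A]
    (act : B →ₗ[ℂ] Module.End ℂ A) (F : ℕ → B ⊗[ℂ] B)
    (f g : PowerSeries A) : PowerSeries A :=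
  PowerSeries.mk fun n => ∑ p ∈ Finset.HasAntidiagonal.antidiagonal n, ∑ r ∈ Finset.HasAntidiagonal.antidiagonal p.2,
    muF act (F p.1) (PowerSeries.coeff (R := A) r.1 f) (PowerSeries.coeff (R := A) r.2 g)


section helpers

variable {B A : Type*} [Ring B] [Algebra ℂ B] [Ring A] [Algebra ℂ A]
    (act : B →ₗ[ℂ] Module.End ℂ A)

lemma muF_tmul (x y : B) (a b : A) :
    muF act (x ⊗ₜ[ℂ] y) a b = act x a * act y b := by
  simp [muF, actTwo]

lemma muF_zero_w (a b : A) : muF act (0 : B ⊗[ℂ] B) a b = 0 := by simp [muF]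

lemma muF_add_w (w w' : B ⊗[ℂ] B) (a b : A) :
    muF act (w + w') a b = muF act w a b + muF act w' a b := by simp [muF]

lemma muF_zero_a (w : B ⊗[ℂ] B) (b : A) : muF act w 0 b = 0 := by simp [muF]

lemma muF_zero_b (w : B ⊗[ℂ] B) (a : A) : muF act w a 0 = 0 := by simp [muF]

lemma muF_add_a (w : B ⊗[ℂ] B) (a a' b : A) :
    muF act w (a + a') b = muF act w a b + muF act w a' b := by simp [muF, add_tmul]

lemma muF_add_b (w : B ⊗[ℂ] B) (a b b' : A) :
    muF act w a (b + b') = muF act w a b + muF act w a b' := by simp [muF, tmul_add]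

lemma muF_sum_a {ι : Type*} (s : Finset ι) (x : ι → A) (w : B ⊗[ℂ] B) (b : A) :
    muF act w (∑ i ∈ s, x i) b = ∑ i ∈ s, muF act w (x i) b := by
  simp [muF, sum_tmul]

lemma muF_sum_b {ι : Type*} (s : Finset ι) (x : ι → A) (w : B ⊗[ℂ] B) (a : A) :
    muF act w a (∑ i ∈ s, x i) = ∑ i ∈ s, muF act w a (x i) := by
  simp [muF, tmul_sum]

noncomputable def mu3 (a b c : A) : B ⊗[ℂ] (B ⊗[ℂ] B) →ₗ[ℂ] A :=
  LinearMap.mul' ℂ A ∘ₗ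
    TensorProduct.map (act.flip a)
      (LinearMap.mul' ℂ A ∘ₗ TensorProduct.map (act.flip b) (act.flip c))

lemma mu3_tmul (a b c : A) (x y z : B) :
    mu3 act a b c (x ⊗ₜ[ℂ] (y ⊗ₜ[ℂ] z)) = act x a * (act y b * act z c) := by
  simp [mu3]

end helpers

section key

variable {B A : Type*} [Ring B] [Bialgebra ℂ B] [Ring A] [Algebra ℂ A]
    (act : B →ₗ[ℂ] Module.End ℂ A)
    (hact_mul : ∀ (g h : B) (a : A), act (g * h) a = act g (act h a))
    (hmodalg_mul : ∀ (h : B) (a b : A),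
      act h (a * b) = muF act (Coalgebra.comul h) a b)
    (hmodalg_one : ∀ h : B, act h (1 : A) = Coalgebra.counit (R := ℂ) h • (1 : A))

include hact_mul hmodalg_mul in
lemma key_left (a b c : A) (w v : B ⊗[ℂ] B) :
    muF act w (muF act v a b) c
      = mu3 act a b c ((Algebra.TensorProduct.assoc ℂ ℂ ℂ B B B)
          ((TensorProduct.map (Coalgebra.comul (R := ℂ)) LinearMap.id) w
            * (v ⊗ₜ (1 : B)))) := by
  induction w using TensorProduct.induction_on with
  | zero => simp [muF_zero_w]
  | add w w' hw hw' => simp [muF_add_w, hw, hw', add_mul]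
  | tmul x y =>
    induction v using TensorProduct.induction_on with
    | zero => simp [muF_zero_w, muF_zero_a, zero_tmul]
    | add v v' hv hv' => simp only [muF_add_w, muF_add_a, hv, hv', add_tmul,
        mul_add, map_add]
    | tmul u u' =>
      rw [muF_tmul, muF_tmul, hmodalg_mul]
      have h1 : (TensorProduct.map (Coalgebra.comul (R := ℂ)) LinearMap.id)
          (x ⊗ₜ[ℂ] y) = (Coalgebra.comul (R := ℂ) x) ⊗ₜ[ℂ] y := by simp
      rw [h1]
      generalize Coalgebra.comul (R := ℂ) x = d
      induction d using TensorProduct.induction_on with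
      | zero => simp [muF_zero_w, zero_tmul]
      | add d d' hd hd' => simp only [muF_add_w, hd, hd', add_tmul, add_mul, map_add]
      | tmul d1 d2 =>
        rw [muF_tmul, Algebra.TensorProduct.tmul_mul_tmul,
          Algebra.TensorProduct.tmul_mul_tmul, mul_one,
          Algebra.TensorProduct.assoc_tmul, mu3_tmul, hact_mul, hact_mul, mul_assoc]

include hact_mul hmodalg_mul in
lemma key_right (a b c : A) (w v : B ⊗[ℂ] B) :
    muF act w a (muF act v b c)
      = mu3 act a b c
          ((TensorProduct.map LinearMap.id (Coalgebra.comul (R := ℂ))) w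
            * ((1 : B) ⊗ₜ v)) := by
  induction w using TensorProduct.induction_on with
  | zero => simp [muF_zero_w]
  | add w w' hw hw' => simp [muF_add_w, hw, hw', add_mul]
  | tmul x y =>
    induction v using TensorProduct.induction_on with
    | zero => simp [muF_zero_w, muF_zero_b, tmul_zero]
    | add v v' hv hv' => simp only [muF_add_w, muF_add_b, hv, hv', tmul_add,
        mul_add, map_add]
    | tmul u u' =>
      rw [muF_tmul, muF_tmul, hmodalg_mul]
      have h1 : (TensorProduct.map LinearMap.id (Coalgebra.comul (R := ℂ)))
          (x ⊗ₜ[ℂ] y) = x ⊗ₜ[ℂ] (Coalgebra.comul (R := ℂ) y) := by simp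
      rw [h1]
      generalize Coalgebra.comul (R := ℂ) y = d
      induction d using TensorProduct.induction_on with
      | zero => simp [muF_zero_w, tmul_zero]
      | add d d' hd hd' => simp only [muF_add_w, hd, hd', tmul_add, add_mul, mul_add, map_add]
      | tmul d1 d2 =>
        rw [muF_tmul, Algebra.TensorProduct.tmul_mul_tmul,
          Algebra.TensorProduct.tmul_mul_tmul, mul_one, mu3_tmul, hact_mul, hact_mul]

include hmodalg_one in
lemma muF_one_right (w : B ⊗[ℂ] B) (a : A) :
    muF act w a 1
      = act ((TensorProduct.rid ℂ B)
          ((TensorProduct.map LinearMap.id (Coalgebra.counit (R := ℂ))) w)) a := by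
  induction w using TensorProduct.induction_on with
  | zero => simp [muF_zero_w]
  | add w w' hw hw' => simp [muF_add_w, hw, hw']
  | tmul x y =>
    rw [muF_tmul, hmodalg_one]
    simp [mul_smul_comm]

include hmodalg_one in
lemma muF_one_left (w : B ⊗[ℂ] B) (b : A) :
    muF act w 1 b
      = act ((TensorProduct.lid ℂ B)
          ((TensorProduct.map (Coalgebra.counit (R := ℂ)) LinearMap.id) w)) b := by
  induction w using TensorProduct.induction_on with
  | zero => simp [muF_zero_w]
  | add w w' hw hw' => simp [muF_add_w, hw, hw']
  | tmul x y =>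
    rw [muF_tmul, hmodalg_one]
    simp [smul_mul_assoc]

include hact_mul hmodalg_mul in
lemma key_braid (F : ℕ → B ⊗[ℂ] B)
    (hbraid : ∀ n : ℕ,
      ∑ p ∈ Finset.HasAntidiagonal.antidiagonal n,
          (Algebra.TensorProduct.assoc ℂ ℂ ℂ B B B)
            ((TensorProduct.map (Coalgebra.comul (R := ℂ)) LinearMap.id) (F p.1)
              * (F p.2 ⊗ₜ (1 : B)))
        = ∑ p ∈ Finset.HasAntidiagonal.antidiagonal n,
          (TensorProduct.map LinearMap.id (Coalgebra.comul (R := ℂ))) (F p.1)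
            * ((1 : B) ⊗ₜ F p.2))
    (k : ℕ) (a b c : A) :
    ∑ v ∈ Finset.HasAntidiagonal.antidiagonal k, muF act (F v.1) (muF act (F v.2) a b) c
      = ∑ v ∈ Finset.HasAntidiagonal.antidiagonal k, muF act (F v.1) a (muF act (F v.2) b c) := by
  calc ∑ v ∈ Finset.HasAntidiagonal.antidiagonal k, muF act (F v.1) (muF act (F v.2) a b) c
      = ∑ v ∈ Finset.HasAntidiagonal.antidiagonal k, mu3 act a b c
          ((Algebra.TensorProduct.assoc ℂ ℂ ℂ B B B)
            ((TensorProduct.map (Coalgebra.comul (R := ℂ)) LinearMap.id) (F v.1)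
              * (F v.2 ⊗ₜ (1 : B)))) :=
        Finset.sum_congr rfl fun v _ =>
          key_left act hact_mul hmodalg_mul a b c (F v.1) (F v.2)
    _ = mu3 act a b c (∑ v ∈ Finset.HasAntidiagonal.antidiagonal k,
          (Algebra.TensorProduct.assoc ℂ ℂ ℂ B B B)
            ((TensorProduct.map (Coalgebra.comul (R := ℂ)) LinearMap.id) (F v.1)
              * (F v.2 ⊗ₜ (1 : B)))) := (map_sum _ _ _).symm
    _ = mu3 act a b c (∑ v ∈ Finset.HasAntidiagonal.antidiagonal k,
          (TensorProduct.map LinearMap.id (Coalgebra.comul (R := ℂ))) (F v.1)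
            * ((1 : B) ⊗ₜ F v.2)) := by rw [hbraid k]
    _ = ∑ v ∈ Finset.HasAntidiagonal.antidiagonal k, mu3 act a b c
          ((TensorProduct.map LinearMap.id (Coalgebra.comul (R := ℂ))) (F v.1)
            * ((1 : B) ⊗ₜ F v.2)) := map_sum _ _ _
    _ = ∑ v ∈ Finset.HasAntidiagonal.antidiagonal k, muF act (F v.1) a (muF act (F v.2) b c) :=
        Finset.sum_congr rfl fun v _ =>
          (key_right act hact_mul hmodalg_mul a b c (F v.1) (F v.2)).symm

end key

section five
open Finset

lemma fiveL {M : Type*} [AddCommMonoid M] (n : ℕ) (T : ℕ → ℕ → ℕ → ℕ → ℕ → M) :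
    (∑ p ∈ antidiagonal n, ∑ r ∈ antidiagonal p.2, ∑ u ∈ antidiagonal r.1,
        ∑ v ∈ antidiagonal u.2, T p.1 u.1 v.1 v.2 r.2)
    = ∑ p ∈ antidiagonal n, ∑ r ∈ antidiagonal p.2, ∑ u ∈ antidiagonal r.2,
        ∑ v ∈ antidiagonal p.1, T v.1 v.2 r.1 u.1 u.2 := by
  rw [Finset.sum_sigma' (antidiagonal n) (fun p => antidiagonal p.2)]
  rw [Finset.sum_sigma' ((antidiagonal n).sigma (fun p => antidiagonal p.2))
    (fun x => antidiagonal x.2.1)]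
  rw [Finset.sum_sigma']
  conv_rhs =>
    rw [Finset.sum_sigma' (antidiagonal n) (fun p => antidiagonal p.2)]
    rw [Finset.sum_sigma' ((antidiagonal n).sigma (fun p => antidiagonal p.2))
      (fun x => antidiagonal x.2.2)]
    rw [Finset.sum_sigma']
  refine Finset.sum_nbij'
    (fun z => ⟨⟨⟨(z.1.1.1.1 + z.1.2.1, z.2.1 + z.2.2 + z.1.1.2.2),
        (z.2.1, z.2.2 + z.1.1.2.2)⟩, (z.2.2, z.1.1.2.2)⟩, (z.1.1.1.1, z.1.2.1)⟩)
    (fun z => ⟨⟨⟨(z.2.1, z.2.2 + z.1.1.2.1 + z.1.2.1 + z.1.2.2),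
        (z.2.2 + z.1.1.2.1 + z.1.2.1, z.1.2.2)⟩, (z.2.2, z.1.1.2.1 + z.1.2.1)⟩,
        (z.1.1.2.1, z.1.2.1)⟩)
    ?_ ?_ ?_ ?_ ?_
  · rintro ⟨⟨⟨⟨p1,p2⟩,⟨r1,r2⟩⟩,⟨u1,u2⟩⟩,⟨v1,v2⟩⟩ hz
    simp only [Finset.mem_sigma, Finset.HasAntidiagonal.mem_antidiagonal, and_true, true_and] at *
    omega
  · rintro ⟨⟨⟨⟨p1,p2⟩,⟨r1,r2⟩⟩,⟨u1,u2⟩⟩,⟨v1,v2⟩⟩ hz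
    simp only [Finset.mem_sigma, Finset.HasAntidiagonal.mem_antidiagonal, and_true, true_and] at *
    omega
  · rintro ⟨⟨⟨⟨p1,p2⟩,⟨r1,r2⟩⟩,⟨u1,u2⟩⟩,⟨v1,v2⟩⟩ hz
    simp only [Finset.mem_sigma, Finset.HasAntidiagonal.mem_antidiagonal] at hz
    obtain ⟨⟨⟨h1, h2⟩, h3⟩, h4⟩ := hz
    simp only [Sigma.mk.inj_iff, Prod.mk.injEq, heq_eq_eq, and_true, true_and]
    omega
  · rintro ⟨⟨⟨⟨p1,p2⟩,⟨r1,r2⟩⟩,⟨u1,u2⟩⟩,⟨v1,v2⟩⟩ hz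
    simp only [Finset.mem_sigma, Finset.HasAntidiagonal.mem_antidiagonal] at hz
    obtain ⟨⟨⟨h1, h2⟩, h3⟩, h4⟩ := hz
    simp only [Sigma.mk.inj_iff, Prod.mk.injEq, heq_eq_eq, and_true, true_and]
    omega
  · rintro ⟨⟨⟨⟨p1,p2⟩,⟨r1,r2⟩⟩,⟨u1,u2⟩⟩,⟨v1,v2⟩⟩ hz
    rfl

lemma fiveR {M : Type*} [AddCommMonoid M] (n : ℕ) (T : ℕ → ℕ → ℕ → ℕ → ℕ → M) :
    (∑ p ∈ antidiagonal n, ∑ r ∈ antidiagonal p.2, ∑ u ∈ antidiagonal r.2,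
        ∑ v ∈ antidiagonal u.2, T p.1 u.1 r.1 v.1 v.2)
    = ∑ p ∈ antidiagonal n, ∑ r ∈ antidiagonal p.2, ∑ u ∈ antidiagonal r.2,
        ∑ v ∈ antidiagonal p.1, T v.1 v.2 r.1 u.1 u.2 := by
  rw [Finset.sum_sigma' (antidiagonal n) (fun p => antidiagonal p.2)]
  rw [Finset.sum_sigma' ((antidiagonal n).sigma (fun p => antidiagonal p.2))
    (fun x => antidiagonal x.2.2)]
  rw [Finset.sum_sigma']
  conv_rhs =>
    rw [Finset.sum_sigma' (antidiagonal n) (fun p => antidiagonal p.2)]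
    rw [Finset.sum_sigma' ((antidiagonal n).sigma (fun p => antidiagonal p.2))
      (fun x => antidiagonal x.2.2)]
    rw [Finset.sum_sigma']
  refine Finset.sum_nbij'
    (fun z => ⟨⟨⟨(z.1.1.1.1 + z.1.2.1, z.1.1.2.1 + z.2.1 + z.2.2),
        (z.1.1.2.1, z.2.1 + z.2.2)⟩, (z.2.1, z.2.2)⟩, (z.1.1.1.1, z.1.2.1)⟩)
    (fun z => ⟨⟨⟨(z.2.1, z.1.1.2.1 + z.2.2 + z.1.2.1 + z.1.2.2),
        (z.1.1.2.1, z.2.2 + z.1.2.1 + z.1.2.2)⟩, (z.2.2, z.1.2.1 + z.1.2.2)⟩,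
        (z.1.2.1, z.1.2.2)⟩)
    ?_ ?_ ?_ ?_ ?_
  · rintro ⟨⟨⟨⟨p1,p2⟩,⟨r1,r2⟩⟩,⟨u1,u2⟩⟩,⟨v1,v2⟩⟩ hz
    simp only [Finset.mem_sigma, Finset.HasAntidiagonal.mem_antidiagonal, and_true, true_and] at *
    omega
  · rintro ⟨⟨⟨⟨p1,p2⟩,⟨r1,r2⟩⟩,⟨u1,u2⟩⟩,⟨v1,v2⟩⟩ hz
    simp only [Finset.mem_sigma, Finset.HasAntidiagonal.mem_antidiagonal, and_true, true_and] at *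
    omega
  · rintro ⟨⟨⟨⟨p1,p2⟩,⟨r1,r2⟩⟩,⟨u1,u2⟩⟩,⟨v1,v2⟩⟩ hz
    simp only [Finset.mem_sigma, Finset.HasAntidiagonal.mem_antidiagonal] at hz
    obtain ⟨⟨⟨h1, h2⟩, h3⟩, h4⟩ := hz
    simp only [Sigma.mk.inj_iff, Prod.mk.injEq, heq_eq_eq, and_true, true_and]
    omega
  · rintro ⟨⟨⟨⟨p1,p2⟩,⟨r1,r2⟩⟩,⟨u1,u2⟩⟩,⟨v1,v2⟩⟩ hz
    simp only [Finset.mem_sigma, Finset.HasAntidiagonal.mem_antidiagonal] at hz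
    obtain ⟨⟨⟨h1, h2⟩, h3⟩, h4⟩ := hz
    simp only [Sigma.mk.inj_iff, Prod.mk.injEq, heq_eq_eq, and_true, true_and]
    omega
  · rintro ⟨⟨⟨⟨p1,p2⟩,⟨r1,r2⟩⟩,⟨u1,u2⟩⟩,⟨v1,v2⟩⟩ hz
    rfl

end five



/-- Giaquinto–Zhang: if `A` is a left `B`-module algebra for a bialgebra `B` and
`F = Σ tⁿ F n` is a universal deformation formula based on `B` (i.e.
`(ε⊗id)(F) = 1⊗1 = (id⊗ε)(F)` and `[(Δ⊗id)(F)](F⊗1) = [(id⊗Δ)(F)](1⊗F)`),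
then the star product `a * b = (m ∘ F)(a ⊗ b)` on `A[[t]]` is associative with
unit `1_A`. -/
theorem udf_gives_formal_deformation {B A : Type*} [Ring B]
    [Bialgebra ℂ B] [Ring A] [Algebra ℂ A]
    (act : B →ₗ[ℂ] Module.End ℂ A)
    (hact_one : ∀ a : A, act 1 a = a)
    (hact_mul : ∀ (g h : B) (a : A), act (g * h) a = act g (act h a))
    (hmodalg_mul : ∀ (h : B) (a b : A),
      act h (a * b) = muF act (Coalgebra.comul h) a b)
    (hmodalg_one : ∀ h : B, act h (1 : A) = Coalgebra.counit (R := ℂ) h • (1 : A))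
    (F : ℕ → B ⊗[ℂ] B)
    (hF0 : F 0 = 1)
    (hcounit_left : ∀ n : ℕ,
      (TensorProduct.lid ℂ B)
          ((TensorProduct.map (Coalgebra.counit (R := ℂ)) LinearMap.id) (F n))
        = if n = 0 then 1 else 0)
    (hcounit_right : ∀ n : ℕ,
      (TensorProduct.rid ℂ B)
          ((TensorProduct.map LinearMap.id (Coalgebra.counit (R := ℂ))) (F n))
        = if n = 0 then 1 else 0)
    (hbraid : ∀ n : ℕ,
      ∑ p ∈ Finset.HasAntidiagonal.antidiagonal n,
          (Algebra.TensorProduct.assoc ℂ ℂ ℂ B B B)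
            ((TensorProduct.map (Coalgebra.comul (R := ℂ)) LinearMap.id) (F p.1)
              * (F p.2 ⊗ₜ (1 : B)))
        = ∑ p ∈ Finset.HasAntidiagonal.antidiagonal n,
          (TensorProduct.map LinearMap.id (Coalgebra.comul (R := ℂ))) (F p.1)
            * ((1 : B) ⊗ₜ F p.2)) :
    (∀ f g h : PowerSeries A,
        starMul act F (starMul act F f g) h = starMul act F f (starMul act F g h)) ∧
      (∀ f : PowerSeries A, starMul act F f 1 = f) ∧
      (∀ f : PowerSeries A, starMul act F 1 f = f) := by
  refine ⟨?_, ?_, ?_⟩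
  · intro f g h
    ext n
    simp only [starMul, PowerSeries.coeff_mk]
    simp only [muF_sum_a, muF_sum_b]
    have H1 := fiveL n (fun q p a b c => muF act (F q)
      (muF act (F p) ((PowerSeries.coeff (R := A) a) f) ((PowerSeries.coeff (R := A) b) g))
      ((PowerSeries.coeff (R := A) c) h))
    have H2 := fiveR n (fun q p a b c => muF act (F q) ((PowerSeries.coeff (R := A) a) f)
      (muF act (F p) ((PowerSeries.coeff (R := A) b) g) ((PowerSeries.coeff (R := A) c) h)))
    refine H1.trans (Eq.trans ?_ H2.symm)
    refine Finset.sum_congr rfl fun p _ => Finset.sum_congr rfl fun r _ =>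
      Finset.sum_congr rfl fun u _ => ?_
    exact key_braid act hact_mul hmodalg_mul F hbraid p.1
      ((PowerSeries.coeff (R := A) r.1) f) ((PowerSeries.coeff (R := A) u.1) g)
      ((PowerSeries.coeff (R := A) u.2) h)
  · intro f
    ext n
    simp only [starMul, PowerSeries.coeff_mk, PowerSeries.coeff_one]
    have inner : ∀ p : ℕ × ℕ, (∑ r ∈ Finset.HasAntidiagonal.antidiagonal p.2,
        muF act (F p.1) ((PowerSeries.coeff (R := A) r.1) f)
          (if r.2 = 0 then (1 : A) else 0))
        = if p.1 = 0 then (PowerSeries.coeff (R := A) p.2) f else 0 := by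
      intro p
      have hmem : ((p.2, 0) : ℕ × ℕ) ∈ Finset.HasAntidiagonal.antidiagonal p.2 := by simp
      have hz : ∀ r ∈ Finset.HasAntidiagonal.antidiagonal p.2, r ≠ (p.2, 0) →
          muF act (F p.1) ((PowerSeries.coeff (R := A) r.1) f)
            (if r.2 = 0 then (1 : A) else 0) = 0 := by
        rintro ⟨r1, r2⟩ hr hne
        simp only [Finset.HasAntidiagonal.mem_antidiagonal] at hr
        have h2 : r2 ≠ 0 := by
          intro h; subst h
          apply hne
          have : r1 = p.2 := by omega
          subst this; rfl
        rw [if_neg h2, muF_zero_b]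
      rw [Finset.sum_eq_single_of_mem (p.2, 0) hmem hz, if_pos rfl,
        muF_one_right act hmodalg_one, hcounit_right]
      split_ifs with h0
      · rw [hact_one]
      · simp
    rw [Finset.sum_congr rfl fun p _ => inner p]
    have hmem : ((0, n) : ℕ × ℕ) ∈ Finset.HasAntidiagonal.antidiagonal n := by simp
    have hz : ∀ p ∈ Finset.HasAntidiagonal.antidiagonal n, p ≠ (0, n) →
        (if p.1 = 0 then (PowerSeries.coeff (R := A) p.2) f else 0) = 0 := by
      rintro ⟨p1, p2⟩ hp hne
      simp only [Finset.HasAntidiagonal.mem_antidiagonal] at hp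
      have h2 : p1 ≠ 0 := by
        intro h; subst h
        apply hne
        have : p2 = n := by omega
        subst this; rfl
      rw [if_neg h2]
    rw [Finset.sum_eq_single_of_mem (0, n) hmem hz, if_pos rfl]
  · intro f
    ext n
    simp only [starMul, PowerSeries.coeff_mk, PowerSeries.coeff_one]
    have inner : ∀ p : ℕ × ℕ, (∑ r ∈ Finset.HasAntidiagonal.antidiagonal p.2,
        muF act (F p.1) (if r.1 = 0 then (1 : A) else 0)
          ((PowerSeries.coeff (R := A) r.2) f))
        = if p.1 = 0 then (PowerSeries.coeff (R := A) p.2) f else 0 := by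
      intro p
      have hmem : ((0, p.2) : ℕ × ℕ) ∈ Finset.HasAntidiagonal.antidiagonal p.2 := by simp
      have hz : ∀ r ∈ Finset.HasAntidiagonal.antidiagonal p.2, r ≠ (0, p.2) →
          muF act (F p.1) (if r.1 = 0 then (1 : A) else 0)
            ((PowerSeries.coeff (R := A) r.2) f) = 0 := by
        rintro ⟨r1, r2⟩ hr hne
        simp only [Finset.HasAntidiagonal.mem_antidiagonal] at hr
        have h2 : r1 ≠ 0 := by
          intro h; subst h
          apply hne
          have : r2 = p.2 := by omega
          subst this; rfl
        rw [if_neg h2, muF_zero_a]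
      rw [Finset.sum_eq_single_of_mem (0, p.2) hmem hz, if_pos rfl,
        muF_one_left act hmodalg_one, hcounit_left]
      split_ifs with h0
      · rw [hact_one]
      · simp
    rw [Finset.sum_congr rfl fun p _ => inner p]
    have hmem : ((0, n) : ℕ × ℕ) ∈ Finset.HasAntidiagonal.antidiagonal n := by simp
    have hz : ∀ p ∈ Finset.HasAntidiagonal.antidiagonal n, p ≠ (0, n) →
        (if p.1 = 0 then (PowerSeries.coeff (R := A) p.2) f else 0) = 0 := by
      rintro ⟨p1, p2⟩ hp hne
      simp only [Finset.HasAntidiagonal.mem_antidiagonal] at hp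
      have h2 : p1 ≠ 0 := by
        intro h; subst h
        apply hne
        have : p2 = n := by omega
        subst this; rfl
      rw [if_neg h2]
    rw [Finset.sum_eq_single_of_mem (0, n) hmem hz, if_pos rfl]
end

section
/- The 4-dimensional algebra A = ℂ⟨s₀, s₁, γ₀, γ₁⟩ with the Taft algebra relations, deformed by setting γ_iγ_{i+1} = t s_{i+1} for a nonzero scalar t, is isomorphic to the algebra of 2×2 complex matrices; in particular it is not isomorphic to A (which is not semisimple). -/
open FreeAlgebra

/-- The relations of the deformed Taft algebra `A_t` on generators
`0 ↦ s₀, 1 ↦ s₁, 2 ↦ γ₀, 3 ↦ γ₁` (indices mod 2), with `γᵢγᵢ₊₁ = t sᵢ₊₁`. -/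
inductive TaftRel (t : ℂ) : FreeAlgebra ℂ (Fin 4) → FreeAlgebra ℂ (Fin 4) → Prop
  | sum : TaftRel t (ι ℂ (0 : Fin 4) + ι ℂ (1 : Fin 4)) 1
  | idem0 : TaftRel t (ι ℂ (0 : Fin 4) * ι ℂ (0 : Fin 4)) (ι ℂ (0 : Fin 4))
  | idem1 : TaftRel t (ι ℂ (1 : Fin 4) * ι ℂ (1 : Fin 4)) (ι ℂ (1 : Fin 4))
  | orth0 : TaftRel t (ι ℂ (0 : Fin 4) * ι ℂ (1 : Fin 4)) 0
  | orth1 : TaftRel t (ι ℂ (1 : Fin 4) * ι ℂ (0 : Fin 4)) 0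
  | nil0 : TaftRel t (ι ℂ (2 : Fin 4) * ι ℂ (2 : Fin 4)) 0
  | nil1 : TaftRel t (ι ℂ (3 : Fin 4) * ι ℂ (3 : Fin 4)) 0
  | gg0 : TaftRel t (ι ℂ (2 : Fin 4) * ι ℂ (3 : Fin 4)) (t • ι ℂ (1 : Fin 4))
  | gg1 : TaftRel t (ι ℂ (3 : Fin 4) * ι ℂ (2 : Fin 4)) (t • ι ℂ (0 : Fin 4))
  | sg00 : TaftRel t (ι ℂ (0 : Fin 4) * ι ℂ (2 : Fin 4)) 0
  | sg11 : TaftRel t (ι ℂ (1 : Fin 4) * ι ℂ (3 : Fin 4)) 0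
  | sg10 : TaftRel t (ι ℂ (1 : Fin 4) * ι ℂ (2 : Fin 4)) (ι ℂ (2 : Fin 4))
  | sg01 : TaftRel t (ι ℂ (0 : Fin 4) * ι ℂ (3 : Fin 4)) (ι ℂ (3 : Fin 4))
  | gs00 : TaftRel t (ι ℂ (2 : Fin 4) * ι ℂ (0 : Fin 4)) (ι ℂ (2 : Fin 4))
  | gs11 : TaftRel t (ι ℂ (3 : Fin 4) * ι ℂ (1 : Fin 4)) (ι ℂ (3 : Fin 4))
  | gs01 : TaftRel t (ι ℂ (2 : Fin 4) * ι ℂ (1 : Fin 4)) 0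
  | gs10 : TaftRel t (ι ℂ (3 : Fin 4) * ι ℂ (0 : Fin 4)) 0

/-- The deformed Taft algebra `A_t`; `A_0` is the undeformed algebra `A`. -/
abbrev TaftAlg (t : ℂ) := RingQuot (TaftRel t)

noncomputable section TaftAux

open Matrix

/-- Target values of the generators in the 2×2 matrix algebra. -/
def taftF (t : ℂ) : Fin 4 → Matrix (Fin 2) (Fin 2) ℂ :=
  ![Matrix.single 0 0 1, Matrix.single 1 1 1, Matrix.single 1 0 1, Matrix.single 0 1 t]

lemma taftF_rel (t : ℂ) : ∀ ⦃x y⦄, TaftRel t x y →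
    FreeAlgebra.lift ℂ (taftF t) x = FreeAlgebra.lift ℂ (taftF t) y := by
  intro x y h
  induction h <;>
    simp [taftF, Matrix.single_mul_single_same, Matrix.smul_single] <;>
    (ext i j; fin_cases i <;> fin_cases j <;>
      simp [Matrix.single, Matrix.one_apply])

/-- The matrix representation of `A_t`. -/
def taftPhi (t : ℂ) : TaftAlg t →ₐ[ℂ] Matrix (Fin 2) (Fin 2) ℂ :=
  RingQuot.liftAlgHom ℂ ⟨FreeAlgebra.lift ℂ (taftF t), taftF_rel t⟩

/-- The images of the generators in `A_t`. -/
def Sg (t : ℂ) (i : Fin 4) : TaftAlg t := RingQuot.mkAlgHom ℂ (TaftRel t) (ι ℂ i)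

lemma taftPhi_Sg (t : ℂ) (i : Fin 4) : taftPhi t (Sg t i) = taftF t i := by
  simp [taftPhi, Sg, RingQuot.liftAlgHom_mkAlgHom_apply]

lemma Sg_one (t : ℂ) : Sg t 0 + Sg t 1 = 1 := by
  have := RingQuot.mkAlgHom_rel ℂ (TaftRel.sum (t := t))
  simpa [Sg, map_add] using this

lemma Sg_mul_mem (t : ℂ) (i j : Fin 4) :
    Sg t i * Sg t j ∈ Submodule.span ℂ ({Sg t 0, Sg t 1, Sg t 2, Sg t 3} :
      Set (TaftAlg t)) := by
  have hrel : ∀ {x y : FreeAlgebra ℂ (Fin 4)}, TaftRel t x y →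
      RingQuot.mkAlgHom ℂ (TaftRel t) x = RingQuot.mkAlgHom ℂ (TaftRel t) y :=
    fun h => RingQuot.mkAlgHom_rel ℂ h
  have hmem : ∀ k : Fin 4, Sg t k ∈ Submodule.span ℂ
      ({Sg t 0, Sg t 1, Sg t 2, Sg t 3} : Set (TaftAlg t)) := by
    intro k; apply Submodule.subset_span; fin_cases k <;> simp
  rw [show Sg t i * Sg t j = RingQuot.mkAlgHom ℂ (TaftRel t) (ι ℂ i * ι ℂ j) by
    simp [Sg, _root_.map_mul]]
  fin_cases i <;> fin_cases j
  · show RingQuot.mkAlgHom ℂ (TaftRel t) (ι ℂ 0 * ι ℂ 0) ∈ _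
    rw [hrel TaftRel.idem0]; exact hmem 0
  · show RingQuot.mkAlgHom ℂ (TaftRel t) (ι ℂ 0 * ι ℂ 1) ∈ _
    rw [hrel TaftRel.orth0]; simp
  · show RingQuot.mkAlgHom ℂ (TaftRel t) (ι ℂ 0 * ι ℂ 2) ∈ _
    rw [hrel TaftRel.sg00]; simp
  · show RingQuot.mkAlgHom ℂ (TaftRel t) (ι ℂ 0 * ι ℂ 3) ∈ _
    rw [hrel TaftRel.sg01]; exact hmem 3
  · show RingQuot.mkAlgHom ℂ (TaftRel t) (ι ℂ 1 * ι ℂ 0) ∈ _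
    rw [hrel TaftRel.orth1]; simp
  · show RingQuot.mkAlgHom ℂ (TaftRel t) (ι ℂ 1 * ι ℂ 1) ∈ _
    rw [hrel TaftRel.idem1]; exact hmem 1
  · show RingQuot.mkAlgHom ℂ (TaftRel t) (ι ℂ 1 * ι ℂ 2) ∈ _
    rw [hrel TaftRel.sg10]; exact hmem 2
  · show RingQuot.mkAlgHom ℂ (TaftRel t) (ι ℂ 1 * ι ℂ 3) ∈ _
    rw [hrel TaftRel.sg11]; simp
  · show RingQuot.mkAlgHom ℂ (TaftRel t) (ι ℂ 2 * ι ℂ 0) ∈ _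
    rw [hrel TaftRel.gs00]; exact hmem 2
  · show RingQuot.mkAlgHom ℂ (TaftRel t) (ι ℂ 2 * ι ℂ 1) ∈ _
    rw [hrel TaftRel.gs01]; simp
  · show RingQuot.mkAlgHom ℂ (TaftRel t) (ι ℂ 2 * ι ℂ 2) ∈ _
    rw [hrel TaftRel.nil0]; simp
  · show RingQuot.mkAlgHom ℂ (TaftRel t) (ι ℂ 2 * ι ℂ 3) ∈ _
    rw [hrel TaftRel.gg0, _root_.map_smul]; exact Submodule.smul_mem _ _ (hmem 1)
  · show RingQuot.mkAlgHom ℂ (TaftRel t) (ι ℂ 3 * ι ℂ 0) ∈ _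
    rw [hrel TaftRel.gs10]; simp
  · show RingQuot.mkAlgHom ℂ (TaftRel t) (ι ℂ 3 * ι ℂ 1) ∈ _
    rw [hrel TaftRel.gs11]; exact hmem 3
  · show RingQuot.mkAlgHom ℂ (TaftRel t) (ι ℂ 3 * ι ℂ 2) ∈ _
    rw [hrel TaftRel.gg1, _root_.map_smul]; exact Submodule.smul_mem _ _ (hmem 0)
  · show RingQuot.mkAlgHom ℂ (TaftRel t) (ι ℂ 3 * ι ℂ 3) ∈ _
    rw [hrel TaftRel.nil1]; simp

lemma span_Sg_top (t : ℂ) :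
    Submodule.span ℂ ({Sg t 0, Sg t 1, Sg t 2, Sg t 3} : Set (TaftAlg t)) = ⊤ := by
  set p := Submodule.span ℂ ({Sg t 0, Sg t 1, Sg t 2, Sg t 3} : Set (TaftAlg t)) with hp
  have hmem : ∀ k : Fin 4, Sg t k ∈ p := by
    intro k; apply Submodule.subset_span; fin_cases k <;> simp
  have hone : (1 : TaftAlg t) ∈ p := by
    rw [← Sg_one t]; exact add_mem (hmem 0) (hmem 1)
  have hmul : ∀ x ∈ p, ∀ y ∈ p, x * y ∈ p := by
    intro x hx
    induction hx using Submodule.span_induction with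
    | mem x hxs =>
      intro y hy
      induction hy using Submodule.span_induction with
      | mem y hys =>
        rcases hxs with rfl | rfl | rfl | rfl <;>
          rcases hys with rfl | rfl | rfl | rfl <;>
          exact Sg_mul_mem t _ _
      | zero => simp
      | add y z _ _ hy hz => rw [mul_add]; exact add_mem hy hz
      | smul a y _ hy => rw [mul_smul_comm]; exact Submodule.smul_mem _ _ hy
    | zero => intro y _; simp
    | add x z _ _ hx hz => intro y hy; rw [add_mul]; exact add_mem (hx y hy) (hz y hy)
    | smul a x _ hx => intro y hy; rw [smul_mul_assoc]; exact Submodule.smul_mem _ _ (hx y hy)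
  rw [eq_top_iff]
  intro x hx
  clear hx
  obtain ⟨y, rfl⟩ := RingQuot.mkAlgHom_surjective ℂ (TaftRel t) x
  induction y with
  | grade0 c =>
    rw [AlgHom.commutes]
    rw [Algebra.algebraMap_eq_smul_one]
    exact Submodule.smul_mem _ _ hone
  | grade1 i => exact hmem i
  | mul a b ha hb => rw [_root_.map_mul]; exact hmul _ ha _ hb
  | add a b ha hb => rw [map_add]; exact add_mem ha hb

/-- The linear inverse of the matrix representation. -/
def taftPsi (t : ℂ) : Matrix (Fin 2) (Fin 2) ℂ →ₗ[ℂ] TaftAlg t where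
  toFun M := M 0 0 • Sg t 0 + M 1 1 • Sg t 1 + M 1 0 • Sg t 2 + (t⁻¹ * M 0 1) • Sg t 3
  map_add' M N := by
    simp only [Matrix.add_apply, add_smul, mul_add]
    abel
  map_smul' c M := by
    simp only [Matrix.smul_apply, smul_eq_mul, RingHom.id_apply, smul_add, smul_smul]
    ring_nf

end TaftAux

/-- For `t ≠ 0`, the deformation `A_t` of the Taft algebra is isomorphic to the
algebra of 2×2 complex matrices; in particular it is not isomorphic to the
undeformed algebra `A = A_0`. -/
theorem taft_deformation_matrix_iso (t : ℂ) (ht : t ≠ 0) :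
    Nonempty (TaftAlg t ≃ₐ[ℂ] Matrix (Fin 2) (Fin 2) ℂ) ∧
      IsEmpty (TaftAlg t ≃ₐ[ℂ] TaftAlg 0) := by
  classical
  -- left inverse
  have hleft : ∀ x : TaftAlg t, taftPsi t (taftPhi t x) = x := by
    have h : (taftPsi t).comp (taftPhi t).toLinearMap = LinearMap.id := by
      apply LinearMap.ext_on (span_Sg_top t)
      intro x hx
      simp only [Set.mem_insert_iff, Set.mem_singleton_iff] at hx
      rcases hx with rfl | rfl | rfl | rfl <;>
        simp [taftPsi, taftPhi_Sg, taftF, Matrix.single_apply_same,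
          Matrix.single_apply_of_ne, inv_mul_cancel₀ ht]
    intro x
    exact LinearMap.congr_fun h x
  have hright : ∀ M : Matrix (Fin 2) (Fin 2) ℂ, taftPhi t (taftPsi t M) = M := by
    intro M
    simp only [taftPsi, LinearMap.coe_mk, AddHom.coe_mk, map_add, map_smul, taftPhi_Sg, taftF]
    ext i j
    fin_cases i <;> fin_cases j <;>
      simp [Matrix.single] <;> field_simp
  let equiv : TaftAlg t ≃ₐ[ℂ] Matrix (Fin 2) (Fin 2) ℂ :=
    AlgEquiv.ofBijective (taftPhi t)
      ⟨Function.LeftInverse.injective hleft,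
       Function.RightInverse.surjective hright⟩
  refine ⟨⟨equiv⟩, ⟨fun e => ?_⟩⟩
  -- an algebra character on the undeformed algebra
  have σrel : ∀ ⦃x y⦄, TaftRel 0 x y →
      FreeAlgebra.lift ℂ (![1, 0, 0, 0] : Fin 4 → ℂ) x =
        FreeAlgebra.lift ℂ (![1, 0, 0, 0] : Fin 4 → ℂ) y := by
    intro x y h
    induction h <;> simp
  let σ : TaftAlg 0 →ₐ[ℂ] ℂ :=
    RingQuot.liftAlgHom ℂ ⟨FreeAlgebra.lift ℂ (![1, 0, 0, 0] : Fin 4 → ℂ), σrel⟩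
  let f : Matrix (Fin 2) (Fin 2) ℂ →ₐ[ℂ] ℂ :=
    (σ.comp e.toAlgHom).comp equiv.symm.toAlgHom
  have ha : f (Matrix.single 0 1 1) = 0 := by
    have h2 : f (Matrix.single 0 1 1) * f (Matrix.single 0 1 1) = 0 := by
      rw [← map_mul, show (Matrix.single 0 1 1 * Matrix.single 0 1 1 :
        Matrix (Fin 2) (Fin 2) ℂ) = 0 from Matrix.single_mul_single_of_ne 1 (0 : Fin 2) 1 0 (by decide) 1]
      simp
    exact mul_self_eq_zero.mp h2
  have h1 : (1 : Matrix (Fin 2) (Fin 2) ℂ) =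
      Matrix.single 0 1 1 * Matrix.single 1 0 1 +
        Matrix.single 1 0 1 * Matrix.single 0 1 1 := by
    rw [Matrix.single_mul_single_same, Matrix.single_mul_single_same]
    ext i j
    fin_cases i <;> fin_cases j <;> simp [Matrix.single, Matrix.one_apply]
  have hcontra : (1 : ℂ) = 0 := by
    calc (1 : ℂ) = f 1 := (map_one f).symm
    _ = f (Matrix.single 0 1 1) * f (Matrix.single 1 0 1) +
        f (Matrix.single 1 0 1) * f (Matrix.single 0 1 1) := by
        rw [h1, map_add, map_mul, map_mul]
    _ = 0 := by rw [ha]; ring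
  exact one_ne_zero hcontra
end
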